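/- Let (X, ≤) be a finite poset such that no connected component of X is a single point (equivalently, every x ∈ X is comparable with some y ≠ x). Let K be the K-complex of the relation ≤ and K' the K-complex of the strict relation <, i.e., K' consists of the nonempty finite subsets s of X such that there exists y ∈ X with x < y for all x ∈ s. Then K simplicially collapses to K'. -/

import Mathlib

/-- An elementary simplicial collapse: there are simplices `σ ⊊ σ'` in `T` such that `σ'` is
the unique simplex of `T` properly containing `σ`, and `M = T \ {σ, σ'}`. -/
def ElemCollapse {X : Type} (T M : Set (Finset X)) : Prop :=
  ∃ σ σ' : Finset X, σ ∈ T ∧ σ' ∈ T ∧ σ ⊂ σ' ∧ (∀ τ ∈ T, σ ⊂ τ → τ = σ') ∧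
    M = T \ {σ, σ'}

/-- The set of "lower halves" of the matching: simplices whose maximum `m` is maximal in `X`
and which do not contain `a m`. -/
def Pset {X : Type} [PartialOrder X] (a : X → X) : Set (Finset X) :=
  {σ | ∃ m, IsMax m ∧ m ∈ σ ∧ (∀ x ∈ σ, x ≤ m) ∧ a m ∉ σ}

/-- Simplices removed so far, given the set `S` of removed lower halves. -/
def Uset {X : Type} [PartialOrder X] [DecidableEq X] (a : X → X) (S : Set (Finset X)) :
    Set (Finset X) :=
  {τ | τ ∈ S ∨ ∃ m, IsMax m ∧ m ∈ τ ∧ (∀ x ∈ τ, x ≤ m) ∧ a m ∈ τ ∧ τ.erase (a m) ∈ S}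

lemma key {X : Type} [Fintype X] [PartialOrder X] [DecidableEq X] (a : X → X)
    (ha : ∀ m : X, IsMax m → a m < m) :
    ∀ (n : ℕ) (S : Set (Finset X)), S ⊆ Pset a → (Pset a \ S).ncard = n →
    Relation.ReflTransGen (ElemCollapse (X := X))
      ({s : Finset X | s.Nonempty ∧ ∃ y : X, ∀ x ∈ s, x ≤ y} \ Uset a S)
      {s : Finset X | s.Nonempty ∧ ∃ y : X, ∀ x ∈ s, x < y} := by
  intro n
  induction n with
  | zero =>
    intro S hSP h0
    have hfin : (Pset a \ S).Finite := Set.toFinite _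
    have hPS : Pset a \ S = ∅ := (Set.ncard_eq_zero hfin).mp h0
    have hSP' : S = Pset a := by
      apply Set.Subset.antisymm hSP
      intro σ hσ
      by_contra hσS
      exact absurd (hPS ▸ Set.mem_diff σ |>.mpr ⟨hσ, hσS⟩) (Set.notMem_empty σ)
    subst hSP'
    have : ({s : Finset X | s.Nonempty ∧ ∃ y : X, ∀ x ∈ s, x ≤ y} \ Uset a (Pset a))
        = {s : Finset X | s.Nonempty ∧ ∃ y : X, ∀ x ∈ s, x < y} := by
      ext s
      constructor
      · rintro ⟨⟨hne, y, hy⟩, hU⟩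
        by_contra hs
        simp only [Set.mem_setOf_eq, not_and, not_exists] at hs
        have hs' := hs hne
        -- y is an upper bound but not strict: some x ∈ s with ¬ x < y, so y ∈ s
        obtain ⟨x, hx, hxy⟩ : ∃ x ∈ s, ¬ x < y := by
          by_contra hc
          push_neg at hc
          exact hs' y (by intro x hx; exact hc x hx)
        have hxy' : x = y := by
          by_contra hne'
          exact hxy (lt_of_le_of_ne (hy x hx) hne')
        have hys : y ∈ s := hxy' ▸ hx
        have hmax : IsMax y := by
          intro b hb
          by_contra hby
          have : y < b := lt_of_le_of_ne hb (fun e => hby (e ▸ le_refl b))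
          exact hs' b (fun x hx => lt_of_le_of_lt (hy x hx) this)
        apply hU
        by_cases has : a y ∈ s
        · right
          refine ⟨y, hmax, hys, hy, has, ?_⟩
          refine ⟨y, hmax, ?_, ?_, ?_⟩
          · exact Finset.mem_erase.mpr ⟨(ha y hmax).ne', hys⟩
          · intro x hx; exact hy x (Finset.mem_of_mem_erase hx)
          · simp [Finset.mem_erase]
        · left
          exact ⟨y, hmax, hys, hy, has⟩
      · rintro ⟨hne, y, hy⟩
        refine ⟨⟨hne, y, fun x hx => (hy x hx).le⟩, ?_⟩
        rintro (⟨m, hm, hms, -, -⟩ | ⟨m, hm, hms, -, -, -⟩) <;>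
          exact (hy m hms).not_ge (hm (hy m hms).le)
    rw [this]
  | succ n ih =>
    intro S hSP hcard
    have hfin : (Pset a \ S).Finite := Set.toFinite _
    have hne : (Pset a \ S).Nonempty := by
      rw [← Set.ncard_pos hfin, hcard]; omega
    obtain ⟨σ, hσmem, hσmax'⟩ := Set.Finite.exists_maximal hfin hne
    have hσmax : ∀ τ ∈ Pset a \ S, id σ ≤ id τ → id σ = id τ :=
      fun τ hτ hle => le_antisymm hle (hσmax' hτ hle)
    have hσP := hσmem.1
    have hσS := hσmem.2
    obtain ⟨m, hm, hmσ, hbd, haσ⟩ := hσP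
    set σ' : Finset X := insert (a m) σ with hσ'def
    have hmne : (a m : X) ≠ m := (ha m hm).ne
    -- all proper supersets of σ in Pset a are in S
    have hsup : ∀ τ ∈ Pset a, σ ⊂ τ → τ ∈ S := by
      intro τ hτP hστ
      by_contra hτS
      exact absurd (hσmax τ ⟨hτP, hτS⟩ (le_of_lt hστ)) (ne_of_lt hστ)
    -- uniqueness of the top element
    have huniq : ∀ (τ : Finset X) (m₂ : X), m ∈ τ → m₂ ∈ τ → (∀ x ∈ τ, x ≤ m₂) → m₂ = m := by
      intro τ m₂ hmτ hm₂τ hbd₂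
      exact le_antisymm (hm (hbd₂ m hmτ)) (hbd₂ m hmτ)
    have hbd' : ∀ x ∈ σ', x ≤ m := by
      intro x hx
      rcases Finset.mem_insert.mp hx with rfl | hx
      · exact (ha m hm).le
      · exact hbd x hx
    have hσK : σ ∈ {s : Finset X | s.Nonempty ∧ ∃ y : X, ∀ x ∈ s, x ≤ y} :=
      ⟨⟨m, hmσ⟩, m, hbd⟩
    have hσ'K : σ' ∈ {s : Finset X | s.Nonempty ∧ ∃ y : X, ∀ x ∈ s, x ≤ y} :=
      ⟨⟨m, Finset.mem_insert_of_mem hmσ⟩, m, hbd'⟩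
    have hσU : σ ∉ Uset a S := by
      rintro (hσS' | ⟨m₂, hm₂, hm₂σ, hbd₂, ham₂, -⟩)
      · exact hσS hσS'
      · have : m₂ = m := huniq σ m₂ hmσ hm₂σ hbd₂
        subst this
        exact haσ ham₂
    have hσ'U : σ' ∉ Uset a S := by
      rintro (hσ'S | ⟨m₂, hm₂, hm₂σ', hbd₂, ham₂, herase⟩)
      · obtain ⟨m₂, hm₂, hm₂σ', hbd₂, ham₂⟩ := hSP hσ'S
        have : m₂ = m := huniq σ' m₂ (Finset.mem_insert_of_mem hmσ) hm₂σ' hbd₂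
        subst this
        exact ham₂ (Finset.mem_insert_self _ _)
      · have : m₂ = m := huniq σ' m₂ (Finset.mem_insert_of_mem hmσ) hm₂σ' hbd₂
        subst this
        rw [show σ'.erase (a m₂) = σ from by
          rw [hσ'def, Finset.erase_insert haσ]] at herase
        exact hσS herase
    have hstep : ElemCollapse (X := X)
        ({s : Finset X | s.Nonempty ∧ ∃ y : X, ∀ x ∈ s, x ≤ y} \ Uset a S)
        ({s : Finset X | s.Nonempty ∧ ∃ y : X, ∀ x ∈ s, x ≤ y} \ Uset a (insert σ S)) := by
      refine ⟨σ, σ', ⟨hσK, hσU⟩, ⟨hσ'K, hσ'U⟩, Finset.ssubset_insert haσ, ?_, ?_⟩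
      · rintro τ ⟨⟨hτne, y, hy⟩, hτU⟩ hστ
        -- upper bound of τ must be m
        have hym : y = m := by
          have h1 : m ≤ y := hy m (hστ.subset hmσ)
          exact le_antisymm (hm h1) h1
        have hy' : ∀ x ∈ τ, x ≤ m := fun x hx => hym ▸ hy x hx
        have hmτ : m ∈ τ := hστ.subset hmσ
        by_cases haτ : a m ∈ τ
        · have hρP : τ.erase (a m) ∈ Pset a := by
            refine ⟨m, hm, Finset.mem_erase.mpr ⟨Ne.symm hmne, hmτ⟩, ?_, ?_⟩
            · intro x hx; exact hy' x (Finset.mem_of_mem_erase hx)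
            · simp [Finset.mem_erase]
          have hσρ : σ ⊆ τ.erase (a m) := by
            intro x hx
            exact Finset.mem_erase.mpr ⟨fun e => haσ (e ▸ hx), hστ.subset hx⟩
          rcases (lt_or_eq_of_le (hσρ : σ ≤ τ.erase (a m))) with hss | heq
          · exact absurd (Or.inr ⟨m, hm, hmτ, hy', haτ, hsup _ hρP hss⟩) hτU
          · rw [hσ'def, heq]
            exact (Finset.insert_erase haτ).symm
        · exact absurd (Or.inl (hsup τ ⟨m, hm, hmτ, hy', haτ⟩ hστ)) hτU
      · have hUeq : Uset a (insert σ S) = Uset a S ∪ {σ, σ'} := by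
          ext τ
          constructor
          · rintro (hτ | ⟨m₂, hm₂, hm₂τ, hbd₂, ham₂, herase⟩)
            · rcases Set.mem_insert_iff.mp hτ with rfl | hτ
              · exact Or.inr (Or.inl rfl)
              · exact Or.inl (Or.inl hτ)
            · rcases Set.mem_insert_iff.mp herase with heq | hτS
              · -- τ.erase (a m₂) = σ, so m₂ = m and τ = σ'
                have hmτ : m ∈ τ := Finset.mem_of_mem_erase (heq ▸ hmσ)
                have : m₂ = m := huniq τ m₂ hmτ hm₂τ hbd₂
                subst this
                right; right
                have : τ = insert (a m₂) (τ.erase (a m₂)) :=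
                  (Finset.insert_erase ham₂).symm
                rw [Set.mem_singleton_iff, hσ'def, this, heq]
              · exact Or.inl (Or.inr ⟨m₂, hm₂, hm₂τ, hbd₂, ham₂, hτS⟩)
          · rintro (hτ | hτ)
            · rcases hτ with hτ | ⟨m₂, hm₂, hm₂τ, hbd₂, ham₂, hτS⟩
              · exact Or.inl (Set.mem_insert_of_mem _ hτ)
              · exact Or.inr ⟨m₂, hm₂, hm₂τ, hbd₂, ham₂, Set.mem_insert_of_mem _ hτS⟩
            · rcases hτ with rfl | hτ
              · exact Or.inl (Set.mem_insert _ _)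
              · rw [Set.mem_singleton_iff] at hτ
                subst hτ
                exact Or.inr ⟨m, hm, Finset.mem_insert_of_mem hmσ, hbd',
                  Finset.mem_insert_self _ _,
                  by rw [hσ'def, Finset.erase_insert haσ]; exact Set.mem_insert _ _⟩
        rw [hUeq, ← Set.diff_diff]
    refine Relation.ReflTransGen.head hstep ?_
    apply ih
    · intro τ hτ
      rcases Set.mem_insert_iff.mp hτ with rfl | hτ
      · exact ⟨m, hm, hmσ, hbd, haσ⟩
      · exact hSP hτ
    · have : Pset a \ insert σ S = (Pset a \ S) \ {σ} := by
        ext τ; simp [Set.mem_insert_iff]; tauto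
      rw [this, Set.ncard_diff_singleton_of_mem hσmem, hcard]
      omega

theorem stmt_15 {X : Type} [Fintype X] [PartialOrder X]
    (h : ∀ x : X, ∃ y : X, y ≠ x ∧ (x ≤ y ∨ y ≤ x)) :
    Relation.ReflTransGen (ElemCollapse (X := X))
      {s : Finset X | s.Nonempty ∧ ∃ y : X, ∀ x ∈ s, x ≤ y}
      {s : Finset X | s.Nonempty ∧ ∃ y : X, ∀ x ∈ s, x < y} := by
  classical
  have hex : ∀ m : X, IsMax m → ∃ y, y < m := by
    intro m hm
    obtain ⟨y, hy, hcomp⟩ := h m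
    rcases hcomp with hle | hle
    · exact absurd (le_antisymm (hm hle) hle) hy
    · exact ⟨y, lt_of_le_of_ne hle hy⟩
  choose a' ha' using hex
  set a : X → X := fun m => if hm : IsMax m then a' m hm else m with hadef
  have ha : ∀ m : X, IsMax m → a m < m := by
    intro m hm
    simp only [hadef, dif_pos hm]
    exact ha' m hm
  have h0 := key a ha (Pset a \ ∅).ncard ∅ (Set.empty_subset _) rfl
  have : Uset a (∅ : Set (Finset X)) = ∅ := by
    ext τ
    simp [Uset]
  rw [this, Set.diff_empty] at h0
  exact h0
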